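/- For every t > 0 and every f ∈ L¹(Ω), the two series Σ_{n≥1} (1 − a_{n−1})^t dE_n(f) and Σ_{n≥1} [(1 − a_{n−1})^t − (1 − a_n)^t] E_n(f) both converge in L¹(Ω) and have the same sum. -/

import Mathlib

open MeasureTheory Filter Set Topology ENNReal

/-- `E_n(f)`: conditional expectation of `f` given `𝒜_n` for `n ≥ 1`, with `E_0 = 0`. -/
noncomputable def condE {Ω : Type*} [m0 : MeasurableSpace Ω] (μ : Measure Ω)
    (F : ℕ → MeasurableSpace Ω) (f : Ω → ℝ) (n : ℕ) : Ω → ℝ :=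
  if n = 0 then 0 else μ[f | F n]

/-- The martingale difference `dE_n(f) = E_n(f) - E_{n-1}(f)`. -/
noncomputable def dE {Ω : Type*} [m0 : MeasurableSpace Ω] (μ : Measure Ω)
    (F : ℕ → MeasurableSpace Ω) (f : Ω → ℝ) (n : ℕ) : Ω → ℝ :=
  fun ω => condE μ F f n ω - condE μ F f (n - 1) ω

/-- For every `t > 0` and `f ∈ L¹(Ω)`, the series `Σ_{n≥1} (1 - a_{n-1})^t dE_n(f)` and
`Σ_{n≥1} [(1 - a_{n-1})^t - (1 - a_n)^t] E_n(f)` both converge in `L¹(Ω)` and have the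
same sum. -/
theorem stmt2 {Ω : Type*} [m0 : MeasurableSpace Ω] (μ : Measure Ω) [IsProbabilityMeasure μ]
    (F : ℕ → MeasurableSpace Ω) (hle : ∀ n, F n ≤ m0) (hmono : Monotone F)
    (a : ℕ → ℝ) (ha0 : a 0 = 0) (hamono : StrictMono a)
    (halim : Tendsto a atTop (𝓝 (1 : ℝ)))
    (t : ℝ) (ht : 0 < t) (f : Ω → ℝ) (hf : Integrable f μ) :
    ∃ g : Ω → ℝ, Integrable g μ ∧
      Tendsto (fun N : ℕ => eLpNorm
          (fun ω => (∑ n ∈ Finset.range N, (1 - a n) ^ t * dE μ F f (n + 1) ω) - g ω)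
          1 μ) atTop (𝓝 0) ∧
      Tendsto (fun N : ℕ => eLpNorm
          (fun ω => (∑ n ∈ Finset.range N,
            ((1 - a n) ^ t - (1 - a (n + 1)) ^ t) * condE μ F f (n + 1) ω) - g ω)
          1 μ) atTop (𝓝 0) := by
  set b : ℕ → ℝ := fun n => (1 - a n) ^ t with hbdef
  -- basic facts about `a` and `b`
  have ha_le1 : ∀ n, a n ≤ 1 := fun n => hamono.monotone.ge_of_tendsto halim n
  have ha_lt1 : ∀ n, a n < 1 := fun n =>
    lt_of_lt_of_le (hamono (Nat.lt_succ_self n)) (ha_le1 (n + 1))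
  have ha_nonneg : ∀ n, 0 ≤ a n := fun n => ha0 ▸ hamono.monotone (Nat.zero_le n)
  have hb_nonneg : ∀ n, 0 ≤ b n := fun n =>
    Real.rpow_nonneg (by linarith [ha_lt1 n]) t
  have hb_anti : ∀ n, b (n + 1) ≤ b n := fun n =>
    Real.rpow_le_rpow (by linarith [ha_lt1 (n + 1)])
      (by linarith [(hamono (Nat.lt_succ_self n)).le]) ht.le
  have hc_nonneg : ∀ n, 0 ≤ b n - b (n + 1) := fun n => sub_nonneg.2 (hb_anti n)
  have hb_tendsto : Tendsto b atTop (𝓝 0) := by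
    have h1 : Tendsto (fun n => 1 - a n) atTop (𝓝 0) := by
      simpa using halim.const_sub (1:ℝ)
    have h2 : ContinuousAt (fun x : ℝ => x ^ t) 0 :=
      Real.continuousAt_rpow_const 0 t (Or.inr ht.le)
    have := h2.tendsto.comp h1
    simpa [Real.zero_rpow ht.ne', Function.comp_def, hbdef] using this
  -- summability of coefficients
  have hcsum : Summable (fun n => b n - b (n + 1)) := by
    apply summable_of_sum_range_le (c := b 0) hc_nonneg
    intro n
    rw [Finset.sum_range_sub' b n]
    linarith [hb_nonneg n]
  -- conditional expectations
  have hEint : ∀ n, Integrable (condE μ F f n) μ := by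
    intro n
    unfold condE
    split
    · exact integrable_zero _ _ _
    · exact integrable_condExp
  have hEnorm : ∀ n, eLpNorm (condE μ F f n) 1 μ ≤ eLpNorm f 1 μ := by
    intro n
    unfold condE
    split
    · simp
    · exact eLpNorm_one_condExp_le_eLpNorm f
  have hEmem : ∀ n, MemLp (condE μ F f n) 1 μ := fun n =>
    memLp_one_iff_integrable.mpr (hEint n)
  have hKfin : eLpNorm f 1 μ ≠ ∞ := (memLp_one_iff_integrable.mpr hf).2.ne
  set K : ℝ := (eLpNorm f 1 μ).toReal with hKdef
  -- Lp elements
  set u : ℕ → Lp ℝ 1 μ := fun n => (hEmem (n + 1)).toLp _ with hudef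
  have hunorm : ∀ n, ‖u n‖ ≤ K := by
    intro n
    rw [hudef]
    rw [Lp.norm_toLp]
    exact ENNReal.toReal_mono hKfin (hEnorm (n + 1))
  have hsum : Summable (fun n => (b n - b (n + 1)) • u n) := by
    apply Summable.of_norm
    apply Summable.of_nonneg_of_le (fun n => norm_nonneg _) (fun n => ?_) (hcsum.mul_right K)
    rw [norm_smul, Real.norm_eq_abs, abs_of_nonneg (hc_nonneg n)]
    exact mul_le_mul_of_nonneg_left (hunorm n) (hc_nonneg n)
  set G : Lp ℝ 1 μ := ∑' n, (b n - b (n + 1)) • u n with hGdef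
  have hGsum : HasSum (fun n => (b n - b (n + 1)) • u n) G := hsum.hasSum
  have htendLp : Tendsto (fun N => ∑ n ∈ Finset.range N, (b n - b (n + 1)) • u n)
      atTop (𝓝 G) := hGsum.tendsto_sum_nat
  -- a.e. identification of partial sums of Lp elements
  have hScoe : ∀ N : ℕ, (⇑(∑ n ∈ Finset.range N, (b n - b (n + 1)) • u n) : Ω → ℝ)
      =ᵐ[μ] fun ω => ∑ n ∈ Finset.range N, (b n - b (n + 1)) * condE μ F f (n + 1) ω := by
    intro N
    induction N with
    | zero => simp only [Finset.range_zero, Finset.sum_empty]; exact Lp.coeFn_zero ℝ 1 μ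
    | succ N ih =>
      have h1 := Lp.coeFn_add (∑ n ∈ Finset.range N, (b n - b (n + 1)) • u n)
        ((b N - b (N + 1)) • u N)
      have h2 := Lp.coeFn_smul (b N - b (N + 1)) (u N)
      have h3 : (⇑(u N) : Ω → ℝ) =ᵐ[μ] condE μ F f (N + 1) := (hEmem (N + 1)).coeFn_toLp
      rw [Finset.sum_range_succ]
      filter_upwards [h1, h2, h3, ih] with ω e1 e2 e3 e4
      simp only [Pi.add_apply, Pi.smul_apply, smul_eq_mul] at e1 e2
      rw [e1, e2, e3, e4, Finset.sum_range_succ]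
  -- convergence of the second series
  have hnorm0 : Tendsto (fun N => ‖(∑ n ∈ Finset.range N, (b n - b (n + 1)) • u n) - G‖)
      atTop (𝓝 0) := by
    simpa using (tendsto_sub_nhds_zero_iff.mpr htendLp).norm
  have heq : ∀ N : ℕ, eLpNorm
      (fun ω => (∑ n ∈ Finset.range N, (b n - b (n + 1)) * condE μ F f (n + 1) ω) - ⇑G ω) 1 μ
      = ENNReal.ofReal ‖(∑ n ∈ Finset.range N, (b n - b (n + 1)) • u n) - G‖ := by
    intro N
    rw [Lp.norm_def, ENNReal.ofReal_toReal (Lp.eLpNorm_ne_top _)]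
    apply eLpNorm_congr_ae
    filter_upwards [Lp.coeFn_sub (∑ n ∈ Finset.range N, (b n - b (n + 1)) • u n) G, hScoe N]
      with ω hsub hS
    rw [hsub, Pi.sub_apply, hS]
  have h2tend : Tendsto (fun N : ℕ => eLpNorm
      (fun ω => (∑ n ∈ Finset.range N, (b n - b (n + 1)) * condE μ F f (n + 1) ω) - ⇑G ω)
      1 μ) atTop (𝓝 0) := by
    simp_rw [heq]
    simpa using ENNReal.tendsto_ofReal hnorm0
  -- Abel summation identity
  have hid : ∀ (N : ℕ) (ω : Ω), (∑ n ∈ Finset.range N, b n * dE μ F f (n + 1) ω)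
      = (∑ n ∈ Finset.range N, (b n - b (n + 1)) * condE μ F f (n + 1) ω)
        + b N * condE μ F f N ω := by
    intro N ω
    induction N with
    | zero => simp [condE]
    | succ N ih =>
      rw [Finset.sum_range_succ, Finset.sum_range_succ, ih]
      simp only [dE, Nat.add_sub_cancel]
      ring
  -- the boundary term tends to 0 in L¹
  have hterm : Tendsto (fun N : ℕ => ENNReal.ofReal (b N) * eLpNorm f 1 μ) atTop (𝓝 0) := by
    have h0 : Tendsto (fun N => ENNReal.ofReal (b N)) atTop (𝓝 0) := by
      simpa using ENNReal.tendsto_ofReal hb_tendsto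
    simpa using ENNReal.Tendsto.mul_const h0 (Or.inr hKfin)
  have hb1 : ∀ N : ℕ, eLpNorm
      (fun ω => (∑ n ∈ Finset.range N, b n * dE μ F f (n + 1) ω) - ⇑G ω) 1 μ
      ≤ eLpNorm (fun ω => (∑ n ∈ Finset.range N,
          (b n - b (n + 1)) * condE μ F f (n + 1) ω) - ⇑G ω) 1 μ
        + ENNReal.ofReal (b N) * eLpNorm f 1 μ := by
    intro N
    have hfun : (fun ω => (∑ n ∈ Finset.range N, b n * dE μ F f (n + 1) ω) - ⇑G ω)
        = (fun ω => (∑ n ∈ Finset.range N,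
            (b n - b (n + 1)) * condE μ F f (n + 1) ω) - ⇑G ω)
          + fun ω => b N * condE μ F f N ω := by
      funext ω
      simp only [Pi.add_apply]
      rw [hid N ω]; ring
    rw [hfun]
    have hm1 : AEStronglyMeasurable (fun ω => (∑ n ∈ Finset.range N,
        (b n - b (n + 1)) * condE μ F f (n + 1) ω) - ⇑G ω) μ :=
      ((integrable_finset_sum _ (fun n _ => (hEint (n + 1)).const_mul _)).sub
        (L1.integrable_coeFn G)).aestronglyMeasurable
    have hm2 : AEStronglyMeasurable (fun ω => b N * condE μ F f N ω) μ :=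
      ((hEint N).const_mul _).aestronglyMeasurable
    refine le_trans (eLpNorm_add_le hm1 hm2 le_rfl) (add_le_add le_rfl ?_)
    have hsmul : (fun ω => b N * condE μ F f N ω) = b N • condE μ F f N := rfl
    rw [hsmul, eLpNorm_const_smul, ← Real.enorm_eq_ofReal (hb_nonneg N)]
    exact mul_le_mul_right (hEnorm N) _
  have h1tend : Tendsto (fun N : ℕ => eLpNorm
      (fun ω => (∑ n ∈ Finset.range N, b n * dE μ F f (n + 1) ω) - ⇑G ω) 1 μ)
      atTop (𝓝 0) := by
    refine tendsto_of_tendsto_of_tendsto_of_le_of_le tendsto_const_nhds ?_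
      (fun N => zero_le) hb1
    simpa using h2tend.add hterm
  exact ⟨⇑G, L1.integrable_coeFn G, h1tend, h2tend⟩
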